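/- For every a ≥ 0, the sum over all c ≥ 0 of the weight generating functions of semistandard tableaux of shape λ(a,0,c) with entries in {1,…,n} equals E_a − E_{a+2} in ℤ[x_1,…,x_n]: Σ_{c≥0} ch SST_n(λ(a,0,c)) = E_a − E_{a+2}. (Since b = 0, every such tableau automatically has residue 0, and the summands vanish for c > n, so the sum is finite.) -/

import Mathlib

open MvPolynomial

/-- A semistandard tableau of skew shape `λ(a,b,c) = (2^{b+c},1^a)/(1^b)` with entries in
`{1,…,n}` (encoded as `Fin n`), given as a pair `T = (L, R)` of strictly increasing columns:
`L` of height `a+c` (occupying rows `b+1,…,a+b+c`) and `R` of height `b+c` (occupying rows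
`1,…,b+c`), with the row condition `l_j ≤ r_{b+j}` for `1 ≤ j ≤ c` (here `0`-indexed). -/
def IsTab (n a b c : ℕ) (T : (Fin (a + c) → Fin n) × (Fin (b + c) → Fin n)) : Prop :=
  StrictMono T.1 ∧ StrictMono T.2 ∧
    ∀ (j : ℕ) (_ : j < c) (h2 : j < a + c) (h3 : b + j < b + c),
      T.1 ⟨j, h2⟩ ≤ T.2 ⟨b + j, h3⟩

/-- The tableau obtained from `T` by sliding the right column `R` down by `k` positions
(`0 ≤ k ≤ min{a,b}`) is again semistandard, i.e. `l_j ≤ r_{b+j−k}` for all `1 ≤ j ≤ c+k`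
(here `0`-indexed). -/
def Slides (n a b c : ℕ) (T : (Fin (a + c) → Fin n) × (Fin (b + c) → Fin n)) (k : ℕ) : Prop :=
  k ≤ a ∧ k ≤ b ∧
    ∀ (j : ℕ) (_ : j < c + k) (h2 : j < a + c) (h3 : b + j - k < b + c),
      T.1 ⟨j, h2⟩ ≤ T.2 ⟨b + j - k, h3⟩

/-- The residue `𝔯_T`: the maximal `k` such that sliding `R` down by `k` positions keeps the
tableau semistandard (`k = 0` always qualifies for a semistandard tableau). -/
noncomputable def tabResidue (n a b c : ℕ)
    (T : (Fin (a + c) → Fin n) × (Fin (b + c) → Fin n)) : ℕ :=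
  sSup {k | Slides n a b c T k}

/-- The weight monomial `x^T = (∏_j x_{l_j}) · (∏_i x_{r_i})` of a tableau `T`. -/
noncomputable def tabWt (n a b c : ℕ) (T : (Fin (a + c) → Fin n) × (Fin (b + c) → Fin n)) :
    MvPolynomial (Fin n) ℤ :=
  (∏ j, X (T.1 j)) * (∏ i, X (T.2 i))

/-- The weight generating function `ch X = Σ_{T ∈ X} x^T` of a (finite) set of tableaux. -/
noncomputable def tabCh (n a b c : ℕ)
    (Xs : Set ((Fin (a + c) → Fin n) × (Fin (b + c) → Fin n))) : MvPolynomial (Fin n) ℤ :=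
  ∑ᶠ T ∈ Xs, tabWt n a b c T

/-- The `j`-th elementary symmetric polynomial in `x_1, …, x_n` over `ℤ`, indexed by `j : ℤ`,
with the conventions `e_0 = 1` and `e_j = 0` for `j < 0` or `j > n`. -/
noncomputable def eZ (n : ℕ) (j : ℤ) : MvPolynomial (Fin n) ℤ :=
  if 0 ≤ j then esymm (Fin n) ℤ j.toNat else 0

/-- `E_r = Σ_{i=0}^{n} e_i · e_{r+i}` for `r : ℤ`. -/
noncomputable def EZ (n : ℕ) (r : ℤ) : MvPolynomial (Fin n) ℤ :=
  ∑ i ∈ Finset.range (n + 1), eZ n i * eZ n (r + i)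

open Finset MvPolynomial




section Aux
variable {n : ℕ}

noncomputable def wtF (n : ℕ) (A : Finset (Fin n)) : MvPolynomial (Fin n) ℤ := ∏ x ∈ A, X x

def cntF (A : Finset (Fin n)) (t : Fin n) : ℕ := #(A.filter (· ≤ t))

def GoodF (A B : Finset (Fin n)) : Prop := ∀ t, cntF B t ≤ cntF A t

lemma cntF_le_card (A : Finset (Fin n)) (t : Fin n) : cntF A t ≤ #A :=
  Finset.card_filter_le _ _

lemma cntF_top (hn : 1 ≤ n) (A : Finset (Fin n)) : cntF A ⟨n-1, by omega⟩ = #A := by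
  unfold cntF
  rw [Finset.filter_true_of_mem]
  intro x _
  have := x.isLt
  rw [Fin.le_def]
  simp only []
  omega

lemma cnt_image {p : ℕ} {f : Fin p → Fin n} (hf : StrictMono f) (t : Fin n) (j : Fin p) :
    f j ≤ t ↔ (j : ℕ) < cntF (Finset.univ.image f) t := by
  have himg : (Finset.univ.image f).filter (· ≤ t)
      = (Finset.univ.filter (fun i => f i ≤ t)).image f := by
    ext x
    simp only [Finset.mem_filter, Finset.mem_image, Finset.mem_univ, true_and]
    constructor
    · rintro ⟨⟨i, -, rfl⟩, hx⟩; exact ⟨i, hx, rfl⟩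
    · rintro ⟨i, hx, rfl⟩; exact ⟨⟨i, rfl⟩, hx⟩
  have hc : cntF (Finset.univ.image f) t = #(Finset.univ.filter (fun i => f i ≤ t)) := by
    rw [cntF, himg, Finset.card_image_of_injective _ hf.injective]
  rw [hc]
  constructor
  · intro hle
    have hsub : Finset.Iic j ⊆ Finset.univ.filter (fun i => f i ≤ t) := by
      intro i hi
      simp only [Finset.mem_Iic] at hi
      simp only [Finset.mem_filter, Finset.mem_univ, true_and]
      exact le_trans (hf.monotone hi) hle
    have := Finset.card_le_card hsub
    rw [Fin.card_Iic] at this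
    omega
  · intro hlt
    by_contra hle
    push_neg at hle
    have hsub : Finset.univ.filter (fun i => f i ≤ t) ⊆ Finset.Iio j := by
      intro i hi
      simp only [Finset.mem_filter, Finset.mem_univ, true_and] at hi
      simp only [Finset.mem_Iio]
      exact hf.lt_iff_lt.mp (lt_of_le_of_lt hi hle)
    have := Finset.card_le_card hsub
    rw [Fin.card_Iio] at this
    omega

lemma good_iff {p q : ℕ} {f : Fin p → Fin n} {g : Fin q → Fin n}
    (hf : StrictMono f) (hg : StrictMono g) (hqp : q ≤ p) :
    (∀ (j : ℕ) (h1 : j < q) (h2 : j < p), f ⟨j, h2⟩ ≤ g ⟨j, h1⟩) ↔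
      GoodF (Finset.univ.image f) (Finset.univ.image g) := by
  constructor
  · intro h t
    set m := cntF (Finset.univ.image g) t with hm
    rcases Nat.eq_zero_or_pos m with h0 | h0
    · omega
    have hmq : m ≤ q := by
      have := cntF_le_card (Finset.univ.image g) t
      rwa [Finset.card_image_of_injective _ hg.injective, Finset.card_univ,
        Fintype.card_fin] at this
    have h1 : m - 1 < q := by omega
    have h2 : m - 1 < p := by omega
    have hgle : g ⟨m - 1, h1⟩ ≤ t := by
      rw [cnt_image hg]
      simpa using by omega
    have hfle : f ⟨m - 1, h2⟩ ≤ t := le_trans (h (m-1) h1 h2) hgle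
    rw [cnt_image hf t ⟨m-1, h2⟩] at hfle
    simp only at hfle
    omega
  · intro h j h1 h2
    have hj : ((⟨j, h1⟩ : Fin q) : ℕ) < cntF (Finset.univ.image g) (g ⟨j, h1⟩) :=
      (cnt_image hg (g ⟨j, h1⟩) ⟨j, h1⟩).mp le_rfl
    exact (cnt_image hf (g ⟨j, h1⟩) ⟨j, h2⟩).mpr (lt_of_lt_of_le hj (h _))

end Aux
section Swap
variable {n : ℕ}

noncomputable def swapAt (t : Fin n) (A B : Finset (Fin n)) : Finset (Fin n) :=
  (B.filter (· ≤ t)) ∪ (A.filter (fun x => ¬ x ≤ t))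

noncomputable def violSet (A B : Finset (Fin n)) : Finset (Fin n) :=
  Finset.univ.filter (fun t => cntF A t < cntF B t)

lemma not_good_iff_violSet (A B : Finset (Fin n)) :
    ¬ GoodF A B ↔ (violSet A B).Nonempty := by
  unfold GoodF violSet
  rw [Finset.filter_nonempty_iff]
  push_neg
  simp

lemma swapAt_filter_le (t : Fin n) (A B : Finset (Fin n)) {s : Fin n} (hs : s ≤ t) :
    (swapAt t A B).filter (· ≤ s) = B.filter (· ≤ s) := by
  unfold swapAt
  ext x
  simp only [Finset.mem_filter, Finset.mem_union]
  constructor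
  · rintro ⟨h1 | h1, h2⟩
    · exact ⟨h1.1, h2⟩
    · exact absurd (le_trans h2 hs) h1.2
  · intro h
    exact ⟨Or.inl ⟨h.1, le_trans h.2 hs⟩, h.2⟩

lemma swapAt_filter_not_le (t : Fin n) (A B : Finset (Fin n)) :
    (swapAt t A B).filter (fun x => ¬ x ≤ t) = A.filter (fun x => ¬ x ≤ t) := by
  unfold swapAt
  ext x
  simp only [Finset.mem_filter, Finset.mem_union]
  tauto

lemma swapAt_swapAt (t : Fin n) (A B : Finset (Fin n)) :
    swapAt t (swapAt t A B) (swapAt t B A) = A := by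
  conv_lhs => rw [swapAt, swapAt_filter_le t B A le_rfl, swapAt_filter_not_le t A B]
  exact Finset.filter_union_filter_not_eq _ A

lemma swapAt_card (t : Fin n) (A B : Finset (Fin n)) :
    #(swapAt t A B) = cntF B t + (#A - cntF A t) := by
  unfold swapAt
  rw [Finset.card_union_of_disjoint]
  · congr 1
    have := Finset.card_filter_add_card_filter_not (s := A) (p := (· ≤ t))
    unfold cntF
    omega
  · rw [Finset.disjoint_left]
    intro x hx hx'
    simp only [Finset.mem_filter] at hx hx'
    exact hx'.2 hx.2

lemma swapAt_wt (t : Fin n) (A B : Finset (Fin n)) :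
    wtF n (swapAt t A B) * wtF n (swapAt t B A) = wtF n A * wtF n B := by
  have hd : ∀ (X Y : Finset (Fin n)),
      Disjoint (Y.filter (· ≤ t)) (X.filter (fun x => ¬ x ≤ t)) := by
    intro X Y
    rw [Finset.disjoint_left]
    intro x hx hx'
    simp only [Finset.mem_filter] at hx hx'
    exact hx'.2 hx.2
  have hsplit : ∀ X : Finset (Fin n),
      wtF n X = wtF n (X.filter (· ≤ t)) * wtF n (X.filter (fun x => ¬ x ≤ t)) := by
    intro X
    rw [wtF, wtF, wtF, ← Finset.prod_union (hd X X),
      Finset.filter_union_filter_not_eq _ X]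
  rw [wtF, wtF, swapAt, swapAt, Finset.prod_union (hd A B), Finset.prod_union (hd B A),
    hsplit A, hsplit B]
  unfold wtF
  ring

lemma cnt_split (X : Finset (Fin n)) (t : Fin n) :
    cntF X t = #(X.filter (· < t)) + (if t ∈ X then 1 else 0) := by
  unfold cntF
  have : X.filter (· ≤ t) = X.filter (· < t) ∪ X.filter (· = t) := by
    rw [← Finset.filter_or]
    apply Finset.filter_congr
    intro x _
    simp only [le_iff_lt_or_eq]
  rw [this, Finset.card_union_of_disjoint, Finset.filter_eq']
  · split <;> simp
  · rw [Finset.disjoint_left]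
    intro x hx hx'
    simp only [Finset.mem_filter] at hx hx'
    exact absurd hx'.2 (by rintro rfl; exact lt_irrefl _ hx.2)

lemma cntLt_le {A B : Finset (Fin n)} {t : Fin n}
    (h : ∀ s, s < t → cntF B s ≤ cntF A s) :
    #(B.filter (· < t)) ≤ #(A.filter (· < t)) := by
  rcases Nat.eq_zero_or_pos t.val with h0 | h0
  · have : ∀ X : Finset (Fin n), X.filter (· < t) = ∅ := by
      intro X
      apply Finset.filter_false_of_mem
      intro x _
      rw [Fin.lt_def]
      omega
    rw [this A, this B]
  · have hlt : t.val - 1 < n := by have := t.isLt; omega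
    set s : Fin n := ⟨t.val - 1, hlt⟩ with hs
    have hfe : ∀ X : Finset (Fin n), X.filter (· < t) = X.filter (· ≤ s) := by
      intro X
      apply Finset.filter_congr
      intro x _
      rw [Fin.lt_def, Fin.le_def]
      simp only [hs]
      constructor <;> (intro; omega)
    rw [hfe A, hfe B]
    exact h s (by rw [Fin.lt_def]; simp [hs]; omega)

lemma firstViol {A B : Finset (Fin n)} {t : Fin n}
    (hv : cntF A t < cntF B t) (hmin : ∀ s, s < t → cntF B s ≤ cntF A s) :
    cntF B t = cntF A t + 1 ∧ t ∈ B ∧ t ∉ A := by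
  have h1 := cntLt_le hmin
  rw [cnt_split A t, cnt_split B t] at hv ⊢
  by_cases hB : t ∈ B <;> by_cases hA : t ∈ A <;> simp [hB, hA] at hv ⊢ <;> omega

end Swap
section Bij
variable {n : ℕ}

open scoped Classical

noncomputable def fSwap (A B : Finset (Fin n)) : Finset (Fin n) × Finset (Fin n) :=
  if h : (violSet A B).Nonempty then
    ((swapAt ((violSet A B).min' h) A B), (swapAt ((violSet A B).min' h) B A))
  else (A, B)

lemma violSet_min'_spec {A B : Finset (Fin n)} (h : (violSet A B).Nonempty) :
    cntF A ((violSet A B).min' h) < cntF B ((violSet A B).min' h) ∧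
    ∀ s, s < (violSet A B).min' h → cntF B s ≤ cntF A s := by
  constructor
  · have := (violSet A B).min'_mem h
    simpa [violSet] using this
  · intro s hs
    by_contra hc
    push_neg at hc
    have hmem : s ∈ violSet A B := by simp [violSet, hc]
    exact absurd ((violSet A B).min'_le s hmem) (not_le.mpr hs)

lemma fSwap_key {A B : Finset (Fin n)} (h : (violSet A B).Nonempty) :
    #(swapAt ((violSet A B).min' h) A B) = #A + 1 ∧
    #(swapAt ((violSet A B).min' h) B A) + 1 = #B ∧
    (violSet (swapAt ((violSet A B).min' h) B A)
      (swapAt ((violSet A B).min' h) A B)).Nonempty ∧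
    ∀ h2, (violSet (swapAt ((violSet A B).min' h) B A)
      (swapAt ((violSet A B).min' h) A B)).min' h2 = (violSet A B).min' h := by
  obtain ⟨hv, hmin⟩ := violSet_min'_spec h
  generalize hT : (violSet A B).min' h = t at *
  obtain ⟨hc1, _hB, _hA⟩ := firstViol hv hmin
  have hAle := cntF_le_card A t
  have hBle := cntF_le_card B t
  have hcard1 : #(swapAt t A B) = #A + 1 := by rw [swapAt_card]; omega
  have hcard2 : #(swapAt t B A) + 1 = #B := by rw [swapAt_card]; omega
  have hcntA' : cntF (swapAt t A B) t = cntF B t := by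
    unfold cntF; rw [swapAt_filter_le t A B le_rfl]
  have hcntB' : cntF (swapAt t B A) t = cntF A t := by
    unfold cntF; rw [swapAt_filter_le t B A le_rfl]
  have htmem : t ∈ violSet (swapAt t B A) (swapAt t A B) := by
    simp only [violSet, Finset.mem_filter, Finset.mem_univ, true_and]
    omega
  have hne : (violSet (swapAt t B A) (swapAt t A B)).Nonempty := ⟨t, htmem⟩
  refine ⟨hcard1, hcard2, hne, fun h2 => ?_⟩
  apply le_antisymm (Finset.min'_le _ _ htmem)
  have hmem2 := (violSet (swapAt t B A) (swapAt t A B)).min'_mem h2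
  set s := (violSet (swapAt t B A) (swapAt t A B)).min' h2 with hs
  simp only [violSet, Finset.mem_filter, Finset.mem_univ, true_and] at hmem2
  by_contra hlt
  push_neg at hlt
  have hsle : s ≤ t := le_of_lt hlt
  have e1 : cntF (swapAt t B A) s = cntF A s := by
    unfold cntF; rw [swapAt_filter_le t B A hsle]
  have e2 : cntF (swapAt t A B) s = cntF B s := by
    unfold cntF; rw [swapAt_filter_le t A B hsle]
  have := hmin s hlt
  omega

lemma fSwap_eq {A B : Finset (Fin n)} (h : (violSet A B).Nonempty) :
    fSwap A B = (swapAt ((violSet A B).min' h) A B,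
      swapAt ((violSet A B).min' h) B A) := dif_pos h

noncomputable def pairsF (n p q : ℕ) : Finset (Finset (Fin n) × Finset (Fin n)) :=
  (Finset.univ.powersetCard p) ×ˢ (Finset.univ.powersetCard q)

lemma mem_pairsF {p q : ℕ} {AB : Finset (Fin n) × Finset (Fin n)} :
    AB ∈ pairsF n p q ↔ #AB.1 = p ∧ #AB.2 = q := by
  simp [pairsF, Finset.mem_product, Finset.mem_powersetCard_univ]

lemma sum_pairsF (p q : ℕ) :
    ∑ AB ∈ pairsF n p q, wtF n AB.1 * wtF n AB.2
      = esymm (Fin n) ℤ p * esymm (Fin n) ℤ q := by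
  rw [pairsF, Finset.sum_product, esymm, esymm, Finset.sum_mul_sum]
  rfl

lemma sum_notGood (hn : 1 ≤ n) (p q : ℕ) (hq : q ≤ p) :
    ∑ AB ∈ (pairsF n p (q+1)).filter (fun AB => ¬ GoodF AB.1 AB.2),
        wtF n AB.1 * wtF n AB.2
      = ∑ AB ∈ pairsF n (p+1) q, wtF n AB.1 * wtF n AB.2 := by
  apply Finset.sum_nbij' (fun AB => fSwap AB.1 AB.2)
    (fun AB => Prod.swap (fSwap AB.2 AB.1))
  · intro AB hAB
    rw [Finset.mem_filter, mem_pairsF] at hAB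
    obtain ⟨⟨hA, hB⟩, hng⟩ := hAB
    have hne := (not_good_iff_violSet AB.1 AB.2).mp hng
    obtain ⟨k1, k2, -, -⟩ := fSwap_key hne
    rw [fSwap_eq hne, mem_pairsF]
    constructor
    · simpa [hA] using k1
    · simp only; omega
  · intro AB hAB
    rw [mem_pairsF] at hAB
    obtain ⟨hA, hB⟩ := hAB
    have hne : (violSet AB.2 AB.1).Nonempty := by
      refine ⟨⟨n - 1, by omega⟩, ?_⟩
      simp only [violSet, Finset.mem_filter, Finset.mem_univ, true_and]
      rw [cntF_top hn, cntF_top hn]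
      omega
    obtain ⟨k1, k2, k3, k4⟩ := fSwap_key hne
    rw [fSwap_eq hne, Prod.swap, Finset.mem_filter, mem_pairsF]
    refine ⟨⟨by simp only [Prod.swap]; omega, by simpa [Prod.swap, hB] using k1⟩, ?_⟩
    rw [not_good_iff_violSet]
    exact k3
  · intro AB hAB
    rw [Finset.mem_filter, mem_pairsF] at hAB
    obtain ⟨⟨hA, hB⟩, hng⟩ := hAB
    have hne := (not_good_iff_violSet AB.1 AB.2).mp hng
    obtain ⟨-, -, k3, k4⟩ := fSwap_key hne
    rw [fSwap_eq hne, fSwap_eq k3]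
    simp only [k4 k3, swapAt_swapAt, Prod.swap]
  · intro AB hAB
    rw [mem_pairsF] at hAB
    obtain ⟨hA, hB⟩ := hAB
    have hne : (violSet AB.2 AB.1).Nonempty := by
      refine ⟨⟨n - 1, by omega⟩, ?_⟩
      simp only [violSet, Finset.mem_filter, Finset.mem_univ, true_and]
      rw [cntF_top hn, cntF_top hn]
      omega
    obtain ⟨-, -, k3, k4⟩ := fSwap_key hne
    rw [fSwap_eq hne, Prod.swap, fSwap_eq k3]
    simp only [k4 k3, swapAt_swapAt]
  · intro AB hAB
    rw [Finset.mem_filter, mem_pairsF] at hAB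
    have hne := (not_good_iff_violSet AB.1 AB.2).mp hAB.2
    rw [fSwap_eq hne]
    exact (swapAt_wt _ _ _).symm

end Bij
section Reindex
variable {n : ℕ}

open scoped Classical

lemma image_card_of_inj {p : ℕ} {f : Fin p → Fin n} (hf : Function.Injective f) :
    #(Finset.univ.image f) = p := by
  rw [Finset.card_image_of_injective _ hf, Finset.card_univ, Fintype.card_fin]

lemma image_orderEmb {A : Finset (Fin n)} {k : ℕ} (h : #A = k) :
    Finset.univ.image ⇑(A.orderEmbOfFin h) = A := by
  apply Finset.coe_injective
  rw [Finset.coe_image, Finset.coe_univ, Set.image_univ, Finset.range_orderEmbOfFin]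

lemma tabCh_eq_pairs (hn : 1 ≤ n) (a c : ℕ) :
    tabCh n a 0 c {T | IsTab n a 0 c T}
      = ∑ AB ∈ (pairsF n (a+c) (0+c)).filter (fun AB => GoodF AB.1 AB.2),
          wtF n AB.1 * wtF n AB.2 := by
  classical
  have hfin : {T | IsTab n a 0 c T}.Finite := Set.toFinite _
  rw [tabCh, ← Set.Finite.coe_toFinset hfin, finsum_mem_coe_finset]
  have bridge : ∀ (f : Fin (a+c) → Fin n) (g : Fin (0+c) → Fin n),
      (∀ (j : ℕ) (_ : j < c) (h2 : j < a + c) (h3 : 0 + j < 0 + c),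
          f ⟨j, h2⟩ ≤ g ⟨0 + j, h3⟩)
      ↔ (∀ (j : ℕ) (h1 : j < 0 + c) (h2 : j < a + c), f ⟨j, h2⟩ ≤ g ⟨j, h1⟩) := by
    intro f g
    constructor
    · intro H j h1 h2
      have h3 : 0 + j < 0 + c := by omega
      have := H j (by omega) h2 h3
      have hje : (⟨0 + j, h3⟩ : Fin (0 + c)) = ⟨j, h1⟩ := by
        apply Fin.ext; simp
      rwa [hje] at this
    · intro H j hj h2 h3
      have h1 : j < 0 + c := by omega
      have := H j h1 h2
      have hje : (⟨0 + j, h3⟩ : Fin (0 + c)) = ⟨j, h1⟩ := by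
        apply Fin.ext; simp
      rwa [hje]
  apply Finset.sum_nbij'
    (fun T => (Finset.univ.image T.1, Finset.univ.image T.2))
    (fun AB =>
      (if h : #AB.1 = a + c then ⇑(AB.1.orderEmbOfFin h) else fun _ => ⟨0, hn⟩,
       if h : #AB.2 = 0 + c then ⇑(AB.2.orderEmbOfFin h) else fun _ => ⟨0, hn⟩))
  · intro T hT
    rw [Set.Finite.mem_toFinset hfin] at hT
    obtain ⟨h1, h2, h3⟩ := hT
    rw [Finset.mem_filter, mem_pairsF]
    refine ⟨⟨image_card_of_inj h1.injective, image_card_of_inj h2.injective⟩, ?_⟩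
    exact (good_iff h1 h2 (by omega)).mp ((bridge T.1 T.2).mp h3)
  · intro AB hAB
    rw [Finset.mem_filter, mem_pairsF] at hAB
    obtain ⟨⟨hA, hB⟩, hg⟩ := hAB
    rw [Set.Finite.mem_toFinset hfin]
    simp only [dif_pos hA, dif_pos hB]
    refine ⟨(AB.1.orderEmbOfFin hA).strictMono, (AB.2.orderEmbOfFin hB).strictMono, ?_⟩
    apply (bridge _ _).mpr
    apply (good_iff (AB.1.orderEmbOfFin hA).strictMono
      (AB.2.orderEmbOfFin hB).strictMono (by omega)).mpr
    rwa [image_orderEmb hA, image_orderEmb hB]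
  · intro T hT
    rw [Set.Finite.mem_toFinset hfin] at hT
    obtain ⟨h1, h2, -⟩ := hT
    have hA := image_card_of_inj (n := n) h1.injective
    have hB := image_card_of_inj (n := n) h2.injective
    simp only [dif_pos hA, dif_pos hB]
    have e1 := Finset.orderEmbOfFin_unique hA (f := T.1)
      (fun x => Finset.mem_image_of_mem _ (Finset.mem_univ x)) h1
    have e2 := Finset.orderEmbOfFin_unique hB (f := T.2)
      (fun x => Finset.mem_image_of_mem _ (Finset.mem_univ x)) h2
    rw [← e1, ← e2]
  · intro AB hAB
    rw [Finset.mem_filter, mem_pairsF] at hAB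
    obtain ⟨⟨hA, hB⟩, -⟩ := hAB
    simp only [dif_pos hA, dif_pos hB]
    rw [image_orderEmb hA, image_orderEmb hB]
  · intro T hT
    rw [Set.Finite.mem_toFinset hfin] at hT
    obtain ⟨h1, h2, -⟩ := hT
    rw [tabWt, wtF, wtF,
      Finset.prod_image (fun i _ j _ h => h1.injective h),
      Finset.prod_image (fun i _ j _ h => h2.injective h)]

noncomputable def eLow (n : ℕ) : ℕ → MvPolynomial (Fin n) ℤ
  | 0 => 0
  | (q+1) => MvPolynomial.esymm (Fin n) ℤ q

lemma tabCh_c (hn : 1 ≤ n) (a c : ℕ) :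
    tabCh n a 0 c {T | IsTab n a 0 c T} =
      MvPolynomial.esymm (Fin n) ℤ (a+c) * MvPolynomial.esymm (Fin n) ℤ c
        - MvPolynomial.esymm (Fin n) ℤ (a+c+1) * eLow n c := by
  classical
  rw [tabCh_eq_pairs hn a c, Nat.zero_add]
  have hsplit := Finset.sum_filter_add_sum_filter_not (pairsF n (a+c) c)
    (fun AB => GoodF AB.1 AB.2) (fun AB => wtF n AB.1 * wtF n AB.2)
  have hall := sum_pairsF (n := n) (a+c) c
  match c with
  | 0 =>
    have hzero : (pairsF n (a+0) 0).filter (fun AB => ¬ GoodF AB.1 AB.2) = ∅ := by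
      rw [Finset.filter_eq_empty_iff]
      intro AB hAB
      rw [mem_pairsF] at hAB
      have h2 : AB.2 = ∅ := Finset.card_eq_zero.mp hAB.2
      simp only [not_not]
      intro t
      simp [cntF, h2]
    rw [hzero, Finset.sum_empty, add_zero] at hsplit
    simp only [eLow, mul_zero, sub_zero]
    rw [hsplit, hall]
  | (q+1) =>
    have hng := sum_notGood hn (a+(q+1)) q (by omega)
    simp only [eLow]
    rw [eq_sub_iff_add_eq, ← hall, ← hsplit]
    congr 1
    rw [← sum_pairsF (n := n) (a+(q+1)+1) q, ← hng]

lemma esymm_zero_of_lt {k : ℕ} (hk : n < k) : MvPolynomial.esymm (Fin n) ℤ k = 0 := by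
  rw [MvPolynomial.esymm, Finset.powersetCard_eq_empty.mpr (by simp [hk]), Finset.sum_empty]

lemma eZ_natCast (k : ℕ) : eZ n (k : ℤ) = MvPolynomial.esymm (Fin n) ℤ k := by
  rw [eZ, if_pos (by omega), Int.toNat_natCast]

end Reindex
/-- For every `a ≥ 0`, `Σ_{c≥0} ch SST_n(λ(a,0,c)) = E_a − E_{a+2}` in `ℤ[x_1,…,x_n]`.
(Since `b = 0`, every such tableau automatically has residue `0`, and the summands vanish for
`c > n`, so the sum is finite.) -/
theorem ch_c_infinity (n : ℕ) (hn : 1 ≤ n) (a : ℕ) :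
    (∑ᶠ c : ℕ, tabCh n a 0 c {T | IsTab n a 0 c T}) =
      EZ n (a : ℤ) - EZ n ((a : ℤ) + 2) := by
  classical
  have hform := tabCh_c (n := n) hn a
  have hsupp : (Function.support fun c => tabCh n a 0 c {T | IsTab n a 0 c T})
      ⊆ ↑(Finset.range (n + 1)) := by
    intro c hc
    simp only [Finset.coe_range, Set.mem_Iio]
    by_contra hcn
    push_neg at hcn
    refine hc ?_
    have hz : tabCh n a 0 c {T | IsTab n a 0 c T} = 0 := by
      rw [hform c, esymm_zero_of_lt (k := a + c) (by omega), esymm_zero_of_lt (k := a + c + 1) (by omega)]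
      ring
    exact hz
  rw [finsum_eq_sum_of_support_subset _ hsupp]
  have step : ∀ c ∈ Finset.range (n + 1),
      tabCh n a 0 c {T | IsTab n a 0 c T}
        = MvPolynomial.esymm (Fin n) ℤ (a+c) * MvPolynomial.esymm (Fin n) ℤ c
          - MvPolynomial.esymm (Fin n) ℤ (a+c+1) * eLow n c := fun c _ => hform c
  rw [Finset.sum_congr rfl step, Finset.sum_sub_distrib]
  refine congrArg₂ (· - ·) ?_ ?_
  · rw [EZ]
    apply Finset.sum_congr rfl
    intro i _
    have h1 : eZ n (i : ℤ) = MvPolynomial.esymm (Fin n) ℤ i := eZ_natCast i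
    have h2 : eZ n ((a : ℤ) + i) = MvPolynomial.esymm (Fin n) ℤ (a + i) := by
      rw [show ((a : ℤ) + i) = ((a + i : ℕ) : ℤ) by push_cast; ring, eZ_natCast]
    rw [h1, h2, mul_comm]
  · rw [EZ, Finset.sum_range_succ', Finset.sum_range_succ]
    have hlast : eZ n ((n : ℕ) : ℤ) * eZ n ((a : ℤ) + 2 + (n : ℕ)) = 0 := by
      rw [show ((a : ℤ) + 2 + (n : ℕ)) = ((a + 2 + n : ℕ) : ℤ) by push_cast; ring,
        eZ_natCast (a + 2 + n), esymm_zero_of_lt (by omega), mul_zero]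
    have hzero : MvPolynomial.esymm (Fin n) ℤ (a + 0 + 1) * eLow n 0 = 0 := by
      simp [eLow]
    rw [hlast, hzero, add_zero, add_zero]
    apply Finset.sum_congr rfl
    intro i _
    simp only [eLow]
    have h1 : eZ n ((i : ℕ) : ℤ) = MvPolynomial.esymm (Fin n) ℤ i := eZ_natCast i
    have h2 : eZ n ((a : ℤ) + 2 + i) = MvPolynomial.esymm (Fin n) ℤ (a + (i+1) + 1) := by
      rw [show ((a : ℤ) + 2 + i) = ((a + (i+1) + 1 : ℕ) : ℤ) by push_cast; ring, eZ_natCast]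
    rw [h1, h2, mul_comm]
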